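/- Pontryagin difference of a convex compact set with a scaled copy of itself. Let U ⊆ ℝᵐ be a nonempty, compact, convex set and let α ∈ [0,1]. Then the Pontryagin difference U ⊖ αU := {x ∈ ℝᵐ : x + αu ∈ U for all u ∈ U} equals the scaled set (1−α)U = {(1−α)u : u ∈ U}. -/
import Mathlib


open Pointwise

/-- **Pontryagin difference of a convex compact set with a scaled copy of itself.**
For a nonempty compact convex `U ⊆ ℝᵐ` and `α ∈ [0,1]`,
`U ⊖ αU = {x : x + αu ∈ U for all u ∈ U}` equals `(1 − α) • U`. -/
theorem pontryagin_diff_self_smul {m : ℕ}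
    (U : Set (Fin m → ℝ)) (hne : U.Nonempty) (hcomp : IsCompact U) (hconv : Convex ℝ U)
    (α : ℝ) (hα : α ∈ Set.Icc (0 : ℝ) 1) :
    {x : Fin m → ℝ | ∀ u ∈ U, x + α • u ∈ U} = (1 - α) • U := by
  obtain ⟨hα0, hα1⟩ := hα
  apply Set.Subset.antisymm
  · -- hard direction
    intro x hx
    simp only [Set.mem_setOf_eq] at hx
    rcases eq_or_lt_of_le hα1 with h1 | h1
    · -- α = 1
      subst h1
      have hx0 : x = 0 := by
        by_contra hx0
        obtain ⟨C, hC⟩ := hcomp.isBounded.exists_norm_le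
        obtain ⟨u0, hu0⟩ := hne
        have key : ∀ n : ℕ, u0 + (n : ℝ) • x ∈ U := by
          intro n
          induction n with
          | zero => simpa using hu0
          | succ k ih =>
            have := hx _ ih
            convert this using 1
            push_cast
            rw [add_smul, one_smul, one_smul]
            abel
        have hxpos : 0 < ‖x‖ := norm_pos_iff.mpr hx0
        obtain ⟨n, hn⟩ := exists_nat_gt ((C + ‖u0‖) / ‖x‖)
        have h2 := hC _ (key n)
        have h3 : (n : ℝ) * ‖x‖ ≤ ‖u0 + (n : ℝ) • x‖ + ‖u0‖ := by
          have := norm_sub_le (u0 + (n : ℝ) • x) u0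
          simp only [add_sub_cancel_left] at this
          rw [norm_smul, Real.norm_natCast] at this
          linarith
        have : (n : ℝ) * ‖x‖ ≤ C + ‖u0‖ := by linarith
        have := (div_lt_iff₀ hxpos).mp hn
        linarith
      subst hx0
      rw [sub_self]
      rw [Set.zero_smul_set hne]
      rfl
    · -- α < 1 : Banach fixed point
      haveI : Nonempty U := hne.to_subtype
      haveI : CompleteSpace U := hcomp.isClosed.completeSpace_coe
      set f : U → U := fun u => ⟨x + α • (u : Fin m → ℝ), hx _ u.2⟩ with hf
      have hcontr : ContractingWith ⟨α, hα0⟩ f := by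
        constructor
        · exact_mod_cast h1
        · apply LipschitzWith.of_dist_le_mul
          intro u v
          have : dist (f u : Fin m → ℝ) (f v : Fin m → ℝ) = α * dist (u : Fin m → ℝ) v := by
            simp only [hf, dist_add_left, dist_smul₀, Real.norm_eq_abs, abs_of_nonneg hα0]
          rw [Subtype.dist_eq, Subtype.dist_eq]
          rw [this]
          exact le_of_eq rfl
      obtain ⟨u, hu⟩ : ∃ u : U, f u = u := ⟨_, hcontr.fixedPoint_isFixedPt⟩
      have heq : x + α • (u : Fin m → ℝ) = u := congrArg Subtype.val hu
      refine ⟨u, u.2, ?_⟩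
      have hx' : x = (u : Fin m → ℝ) - α • u := eq_sub_of_add_eq heq
      show (1 - α) • (u : Fin m → ℝ) = x
      rw [hx', sub_smul, one_smul]
  · -- easy direction
    rintro _ ⟨v, hv, rfl⟩
    intro u hu
    have := hconv hv hu (by linarith : (0:ℝ) ≤ 1 - α) hα0 (by ring)
    simpa using this
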